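/- arXiv:1112.2420 — 2 statements merged into one kernel-verified Lean document; each statement's English description precedes it below -/
import Mathlib

section
/- Let P : ℝ² → Matrix (Fin N) (Fin N) ℂ be continuously differentiable with P² = P at every point. Then at every point, trace([∂₊P, P]·[∂₋P, P]) = −trace(∂₊P·∂₋P). Consequently, with respect to the inner product (X,Y) = −½ trace(X·Y), the tangent vectors ∂₊F = −i[∂₊P, P] and ∂₋F = i[∂₋P, P] of the Generalized Weierstrass immersion satisfy (∂₊F, ∂₋F) = ½·trace(∂₊P·∂₋P), one half the Lagrangian density of the model. -/
open Matrix

noncomputable section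

attribute [local instance] Matrix.normedAddCommGroup Matrix.normedSpace

/-- The Wirtinger derivative `∂₊ = ½(∂/∂x − i ∂/∂y)` of a matrix-valued map on `ℝ²`. -/
def dp {N : ℕ} (P : ℝ × ℝ → Matrix (Fin N) (Fin N) ℂ) (p : ℝ × ℝ) :
    Matrix (Fin N) (Fin N) ℂ :=
  (2 : ℂ)⁻¹ • (fderiv ℝ P p (1, 0) - Complex.I • fderiv ℝ P p (0, 1))

/-- The Wirtinger derivative `∂₋ = ½(∂/∂x + i ∂/∂y)` of a matrix-valued map on `ℝ²`. -/
def dm {N : ℕ} (P : ℝ × ℝ → Matrix (Fin N) (Fin N) ℂ) (p : ℝ × ℝ) :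
    Matrix (Fin N) (Fin N) ℂ :=
  (2 : ℂ)⁻¹ • (fderiv ℝ P p (1, 0) + Complex.I • fderiv ℝ P p (0, 1))

/-- Matrix multiplication as a continuous bilinear map (finite dimensions). -/
def mulCLM (N : ℕ) : Matrix (Fin N) (Fin N) ℂ →L[ℝ]
    Matrix (Fin N) (Fin N) ℂ →L[ℝ] Matrix (Fin N) (Fin N) ℂ :=
  LinearMap.toContinuousLinearMap
  { toFun := fun x => LinearMap.toContinuousLinearMap (LinearMap.mulLeft ℝ x)
    map_add' := by intro x y; ext z; simp [add_mul]
    map_smul' := by intro c x; ext z; simp [smul_mul_assoc] }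

@[simp] lemma mulCLM_apply {N : ℕ} (x y : Matrix (Fin N) (Fin N) ℂ) :
    mulCLM N x y = x * y := rfl

lemma deriv_rel {N : ℕ} {P : ℝ × ℝ → Matrix (Fin N) (Fin N) ℂ}
    (hP : ContDiff ℝ 1 P) (hproj : ∀ p, P p * P p = P p) (p : ℝ × ℝ) (v : ℝ × ℝ) :
    P p * fderiv ℝ P p v + fderiv ℝ P p v * P p = fderiv ℝ P p v := by
  have hD : HasFDerivAt P (fderiv ℝ P p) p :=
    (hP.differentiable one_ne_zero p).hasFDerivAt
  have h2 : HasFDerivAt (fun q => P q * P q)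
      (((mulCLM N).isBoundedBilinearMap.deriv (P p, P p)).comp
        ((fderiv ℝ P p).prod (fderiv ℝ P p))) p := by
    exact ((mulCLM N).isBoundedBilinearMap.hasFDerivAt (P p, P p)).comp p (HasFDerivAt.prodMk hD hD)
  have hfun : (fun q => P q * P q) = P := funext hproj
  rw [hfun] at h2
  have hu := hD.unique h2
  have happ := congrArg (fun (L : (ℝ × ℝ) →L[ℝ] Matrix (Fin N) (Fin N) ℂ) => L v) hu
  exact happ.symm

lemma key_alg {N : ℕ} (A B Q : Matrix (Fin N) (Fin N) ℂ) (hQ : Q * Q = Q)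
    (hA : Q * A + A * Q = A) (hB : Q * B + B * Q = B) :
    (A * Q - Q * A) * (B * Q - Q * B) = -(A * B) := by
  have hQA : Q * A = A - A * Q := by rw [eq_sub_iff_add_eq]; exact hA
  have hQB : Q * B = B - B * Q := by rw [eq_sub_iff_add_eq]; exact hB
  have hQBQ : Q * B * Q = 0 := by rw [hQB, sub_mul, mul_assoc, hQ, sub_self]
  have t1 : A * Q * (B * Q) = 0 := by
    rw [mul_assoc, ← mul_assoc Q B Q, hQBQ, mul_zero]
  have t2 : A * Q * (Q * B) = A * (Q * B) := by
    rw [mul_assoc, ← mul_assoc Q Q B, hQ]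
  have t4 : Q * A * (Q * B) = 0 := by
    rw [hQA, sub_mul, t2, sub_self]
  have t3 : Q * A * (B * Q) = A * (B * Q) := by
    rw [hQA, sub_mul, t1, sub_zero]
  calc (A * Q - Q * A) * (B * Q - Q * B)
      = A * Q * (B * Q) - A * Q * (Q * B) - (Q * A * (B * Q) - Q * A * (Q * B)) := by
        noncomm_ring
    _ = 0 - A * (Q * B) - (A * (B * Q) - 0) := by rw [t1, t2, t3, t4]
    _ = -(A * (Q * B + B * Q)) := by noncomm_ring
    _ = -(A * B) := by rw [hB]

lemma rel_comb {N : ℕ} (c d : ℂ) {X Y Q : Matrix (Fin N) (Fin N) ℂ}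
    (hX : Q * X + X * Q = X) (hY : Q * Y + Y * Q = Y) :
    Q * (c • X + d • Y) + (c • X + d • Y) * Q = c • X + d • Y := by
  calc Q * (c • X + d • Y) + (c • X + d • Y) * Q
      = c • (Q * X + X * Q) + d • (Q * Y + Y * Q) := by
        simp only [mul_add, add_mul, mul_smul_comm, smul_mul_assoc, smul_add]
        abel
    _ = c • X + d • Y := by rw [hX, hY]

/-- For a `C¹` idempotent-valued map `P`, at every point
`trace([∂₊P, P]·[∂₋P, P]) = −trace(∂₊P·∂₋P)`; consequently the tangent vectors
`∂₊F = −i[∂₊P, P]`, `∂₋F = i[∂₋P, P]` of the Generalized Weierstrass immersion satisfy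
`(∂₊F, ∂₋F) = ½·trace(∂₊P·∂₋P)` with respect to the inner product `(X,Y) = −½ trace(X·Y)`. -/
theorem GW_tangent_inner_product {N : ℕ} (P : ℝ × ℝ → Matrix (Fin N) (Fin N) ℂ)
    (hP : ContDiff ℝ 1 P) (hproj : ∀ p, P p * P p = P p) :
    ∀ p, ((dp P p * P p - P p * dp P p) * (dm P p * P p - P p * dm P p)).trace
        = -(dp P p * dm P p).trace
      ∧ -(2 : ℂ)⁻¹ * ((((-Complex.I) • (dp P p * P p - P p * dp P p)) *
            (Complex.I • (dm P p * P p - P p * dm P p))).trace)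
        = (2 : ℂ)⁻¹ * (dp P p * dm P p).trace := by
  intro p
  have h10 := deriv_rel hP hproj p (1, 0)
  have h01 := deriv_rel hP hproj p (0, 1)
  have hdp : dp P p = (2 : ℂ)⁻¹ • fderiv ℝ P p (1, 0)
      + (-((2 : ℂ)⁻¹ * Complex.I)) • fderiv ℝ P p (0, 1) := by
    simp only [dp, smul_sub, smul_smul, neg_smul, ← sub_eq_add_neg]
  have hdm : dm P p = (2 : ℂ)⁻¹ • fderiv ℝ P p (1, 0)
      + ((2 : ℂ)⁻¹ * Complex.I) • fderiv ℝ P p (0, 1) := by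
    simp only [dm, smul_add, smul_smul]
  have hA : P p * dp P p + dp P p * P p = dp P p := by
    rw [hdp]; exact rel_comb _ _ h10 h01
  have hB : P p * dm P p + dm P p * P p = dm P p := by
    rw [hdm]; exact rel_comb _ _ h10 h01
  have e := key_alg (dp P p) (dm P p) (P p) (hproj p) hA hB
  refine ⟨by rw [e, trace_neg], ?_⟩
  have h2 : ((-Complex.I) • (dp P p * P p - P p * dp P p)) *
      (Complex.I • (dm P p * P p - P p * dm P p))
      = (dp P p * P p - P p * dp P p) * (dm P p * P p - P p * dm P p) := by
    rw [smul_mul_assoc, mul_smul_comm, smul_smul]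
    simp [Complex.I_mul_I]
  rw [h2, e, trace_neg]
  ring
end
end

section
/- Let f : ℂ → ℂᴺ be holomorphic and nowhere vanishing, let P(ξ) = (f(ξ)·f(ξ)†)/(f(ξ)†·f(ξ)), viewed as a smooth map ℝ² → Matrix (Fin N) (Fin N) ℂ via ξ₊ = x + iy, and let λ ∈ ℂ with λ ≠ ±1. Define U¹ = (2/(1+λ))[∂₊P, P] and U² = (2/(1−λ))[∂₋P, P]. Then the wave function Φ := I − (2/(1−λ))·P satisfies the linear spectral problem ∂₊Φ = U¹·Φ and ∂₋Φ = U²·Φ at every point. -/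
open Matrix

noncomputable section

attribute [local instance] Matrix.normedAddCommGroup Matrix.normedSpace

/-- The rank-one Hermitian projector `P = (f·f†)/(f†·f)` associated to a vector-valued map
`f : ℂ → ℂᴺ`, viewed as a map on `ℝ²` via `ξ₊ = x + iy`. -/
def projOf {N : ℕ} (f : ℂ → (Fin N → ℂ)) (p : ℝ × ℝ) : Matrix (Fin N) (Fin N) ℂ :=
  (star (f ((p.1 : ℂ) + (p.2 : ℂ) * Complex.I)) ⬝ᵥ f ((p.1 : ℂ) + (p.2 : ℂ) * Complex.I))⁻¹ •
    vecMulVec (f ((p.1 : ℂ) + (p.2 : ℂ) * Complex.I))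
      (star (f ((p.1 : ℂ) + (p.2 : ℂ) * Complex.I)))


lemma star_dot_self_ne_zero {N : ℕ} (v : Fin N → ℂ) (hv : v ≠ 0) : star v ⬝ᵥ v ≠ 0 := by
  have hre : star v ⬝ᵥ v = ((∑ i, Complex.normSq (v i) : ℝ) : ℂ) := by
    simp only [dotProduct, Pi.star_apply, Complex.star_def]
    push_cast
    congr 1
    funext i
    rw [Complex.normSq_eq_conj_mul_self]
  rw [hre]
  intro h
  apply hv
  have h2 : ∑ i, Complex.normSq (v i) = 0 := by exact_mod_cast h
  funext i
  have := (Finset.sum_eq_zero_iff_of_nonneg (fun i _ => Complex.normSq_nonneg (v i))).mp h2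
    i (Finset.mem_univ i)
  simpa [Complex.normSq_eq_zero] using this

lemma vmv_mul_vmv {N : ℕ} (u v w x : Fin N → ℂ) :
    vecMulVec u v * vecMulVec w x = (v ⬝ᵥ w) • vecMulVec u x := by
  ext i j
  simp only [Matrix.mul_apply, Matrix.vecMulVec_apply, Matrix.smul_apply, smul_eq_mul,
    dotProduct, Finset.sum_mul]
  exact Finset.sum_congr rfl fun k _ => by ring

lemma projOf_deriv {N : ℕ} (f : ℂ → (Fin N → ℂ)) (hf : Differentiable ℂ f)
    (hf0 : ∀ ξ, f ξ ≠ 0) (p : ℝ × ℝ) :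
    DifferentiableAt ℝ (projOf f) p ∧
    dp (projOf f) p =
      (star (f ((p.1 : ℂ) + (p.2 : ℂ) * Complex.I)) ⬝ᵥ f ((p.1 : ℂ) + (p.2 : ℂ) * Complex.I))⁻¹ •
        vecMulVec (fderiv ℂ f ((p.1 : ℂ) + (p.2 : ℂ) * Complex.I) 1)
          (star (f ((p.1 : ℂ) + (p.2 : ℂ) * Complex.I)))
      - ((star (f ((p.1 : ℂ) + (p.2 : ℂ) * Complex.I)) ⬝ᵥ f ((p.1 : ℂ) + (p.2 : ℂ) * Complex.I))⁻¹
        * (star (f ((p.1 : ℂ) + (p.2 : ℂ) * Complex.I)) ⬝ᵥ f ((p.1 : ℂ) + (p.2 : ℂ) * Complex.I))⁻¹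
        * (star (f ((p.1 : ℂ) + (p.2 : ℂ) * Complex.I))
            ⬝ᵥ fderiv ℂ f ((p.1 : ℂ) + (p.2 : ℂ) * Complex.I) 1)) •
        vecMulVec (f ((p.1 : ℂ) + (p.2 : ℂ) * Complex.I))
          (star (f ((p.1 : ℂ) + (p.2 : ℂ) * Complex.I))) ∧
    dm (projOf f) p =
      (star (f ((p.1 : ℂ) + (p.2 : ℂ) * Complex.I)) ⬝ᵥ f ((p.1 : ℂ) + (p.2 : ℂ) * Complex.I))⁻¹ •
        vecMulVec (f ((p.1 : ℂ) + (p.2 : ℂ) * Complex.I))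
          (star (fderiv ℂ f ((p.1 : ℂ) + (p.2 : ℂ) * Complex.I) 1))
      - ((star (f ((p.1 : ℂ) + (p.2 : ℂ) * Complex.I)) ⬝ᵥ f ((p.1 : ℂ) + (p.2 : ℂ) * Complex.I))⁻¹
        * (star (f ((p.1 : ℂ) + (p.2 : ℂ) * Complex.I)) ⬝ᵥ f ((p.1 : ℂ) + (p.2 : ℂ) * Complex.I))⁻¹
        * (star (fderiv ℂ f ((p.1 : ℂ) + (p.2 : ℂ) * Complex.I) 1)
            ⬝ᵥ f ((p.1 : ℂ) + (p.2 : ℂ) * Complex.I))) •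
        vecMulVec (f ((p.1 : ℂ) + (p.2 : ℂ) * Complex.I))
          (star (f ((p.1 : ℂ) + (p.2 : ℂ) * Complex.I))) := by
  set z : ℂ := (p.1 : ℂ) + (p.2 : ℂ) * Complex.I with hz
  set F0 : Fin N → ℂ := f z with hF0
  set d : Fin N → ℂ := fderiv ℂ f z 1 with hd
  set s : ℂ := star F0 ⬝ᵥ F0 with hs
  have hs0 : s ≠ 0 := by rw [hs, hF0]; exact star_dot_self_ne_zero _ (hf0 z)
  -- the embedding ℝ×ℝ → ℂ
  set eC : ℝ × ℝ →L[ℝ] ℂ := (Complex.equivRealProdCLM.symm : (ℝ × ℝ) ≃L[ℝ] ℂ).toContinuousLinearMap with heC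
  have heCapp : ∀ v : ℝ × ℝ, eC v = (v.1 : ℂ) + (v.2 : ℂ) * Complex.I := fun v =>
    Complex.equivRealProdCLM_symm_apply v
  have hFe : HasFDerivAt (fun q : ℝ × ℝ => (q.1 : ℂ) + (q.2 : ℂ) * Complex.I) eC p := by
    have := eC.hasFDerivAt (x := p)
    simpa only [funext heCapp] using this
  set LF : ℝ × ℝ →L[ℝ] (Fin N → ℂ) := ((fderiv ℂ f z).restrictScalars ℝ).comp eC with hLF
  have hF : HasFDerivAt (fun q : ℝ × ℝ => f ((q.1 : ℂ) + (q.2 : ℂ) * Complex.I)) LF p :=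
    (((hf z).hasFDerivAt).restrictScalars ℝ).comp p hFe
  have hLFapp : ∀ (v : ℝ × ℝ), LF v = ((v.1 : ℂ) + (v.2 : ℂ) * Complex.I) • d := by
    intro v
    rw [hLF]
    simp only [ContinuousLinearMap.comp_apply, ContinuousLinearMap.coe_restrictScalars',
      heCapp v]
    rw [hd]
    simpa using _root_.map_smul (fderiv ℂ f z) ((v.1 : ℂ) + (v.2 : ℂ) * Complex.I) (1 : ℂ)
  set b : ℂ := star F0 ⬝ᵥ d with hb
  set a : ℂ := star d ⬝ᵥ F0 with ha
  have hFi : ∀ i, HasFDerivAt (fun q : ℝ × ℝ => f ((q.1 : ℂ) + (q.2 : ℂ) * Complex.I) i)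
      ((ContinuousLinearMap.proj i).comp LF) p := fun i => hasFDerivAt_pi'.1 hF i
  set Cj : Fin N → (ℝ × ℝ →L[ℝ] ℂ) := fun j =>
    (Complex.conjCLE.toContinuousLinearMap).comp ((ContinuousLinearMap.proj j).comp LF) with hCj
  have hconj : ∀ j, HasFDerivAt
      (fun q : ℝ × ℝ => star (f ((q.1 : ℂ) + (q.2 : ℂ) * Complex.I) j)) (Cj j) p := fun j =>
    (Complex.conjCLE.toContinuousLinearMap.hasFDerivAt).comp p (hFi j)
  set Ls : ℝ × ℝ →L[ℝ] ℂ := ∑ i, (star (F0 i) • ((ContinuousLinearMap.proj i).comp LF)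
      + F0 i • Cj i) with hLs
  have hsfun : HasFDerivAt
      (fun q : ℝ × ℝ => star (f ((q.1 : ℂ) + (q.2 : ℂ) * Complex.I))
        ⬝ᵥ f ((q.1 : ℂ) + (q.2 : ℂ) * Complex.I)) Ls p := by
    have hrw : (fun q : ℝ × ℝ => star (f ((q.1 : ℂ) + (q.2 : ℂ) * Complex.I))
        ⬝ᵥ f ((q.1 : ℂ) + (q.2 : ℂ) * Complex.I))
        = fun q : ℝ × ℝ => ∑ i, (star (f ((q.1 : ℂ) + (q.2 : ℂ) * Complex.I) i))
          * (f ((q.1 : ℂ) + (q.2 : ℂ) * Complex.I) i) := by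
      funext q; simp [dotProduct]
    rw [hrw, hLs]
    exact HasFDerivAt.fun_sum (fun i _ => (hconj i).mul (hFi i))
  set Linv : ℝ × ℝ →L[ℝ] ℂ :=
    (-(ContinuousLinearMap.mulLeftRight ℝ ℂ s⁻¹ s⁻¹)).comp Ls with hLinv
  have hinv : HasFDerivAt
      (fun q : ℝ × ℝ => (star (f ((q.1 : ℂ) + (q.2 : ℂ) * Complex.I))
        ⬝ᵥ f ((q.1 : ℂ) + (q.2 : ℂ) * Complex.I))⁻¹) Linv p :=
    (hasFDerivAt_inv' hs0).comp p hsfun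
  set E : Fin N → Fin N → (ℝ × ℝ →L[ℝ] ℂ) := fun i j =>
    s⁻¹ • ((F0 i) • Cj j + star (F0 j) • ((ContinuousLinearMap.proj i).comp LF))
      + (F0 i * star (F0 j)) • Linv with hE
  have hentry : ∀ i j, HasFDerivAt
      (fun q : ℝ × ℝ => (star (f ((q.1 : ℂ) + (q.2 : ℂ) * Complex.I))
        ⬝ᵥ f ((q.1 : ℂ) + (q.2 : ℂ) * Complex.I))⁻¹
        * (f ((q.1 : ℂ) + (q.2 : ℂ) * Complex.I) i
          * star (f ((q.1 : ℂ) + (q.2 : ℂ) * Complex.I) j))) (E i j) p :=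
    fun i j => hinv.mul ((hFi i).mul (hconj j))
  set DD : ℝ × ℝ →L[ℝ] Matrix (Fin N) (Fin N) ℂ :=
    ContinuousLinearMap.pi (fun i => ContinuousLinearMap.pi (fun j => E i j)) with hDD
  have hPmat : HasFDerivAt (projOf f) DD p := by
    have hrw : projOf f = fun (q : ℝ × ℝ) (i j : Fin N) =>
        (star (f ((q.1 : ℂ) + (q.2 : ℂ) * Complex.I))
          ⬝ᵥ f ((q.1 : ℂ) + (q.2 : ℂ) * Complex.I))⁻¹
          * (f ((q.1 : ℂ) + (q.2 : ℂ) * Complex.I) i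
            * star (f ((q.1 : ℂ) + (q.2 : ℂ) * Complex.I) j)) := by
      funext q i j
      simp [projOf, Matrix.smul_apply, Matrix.vecMulVec_apply, smul_eq_mul]
    rw [hrw, hDD]
    exact hasFDerivAt_pi.2 fun i => hasFDerivAt_pi.2 fun j => hentry i j
  -- evaluate Ls
  have hLsapp : ∀ v : ℝ × ℝ, Ls v = ((v.1 : ℂ) + (v.2 : ℂ) * Complex.I) * b
      + (starRingEnd ℂ) ((v.1 : ℂ) + (v.2 : ℂ) * Complex.I) * a := by
    intro v
    rw [hLs]
    simp only [ContinuousLinearMap.coe_sum', Finset.sum_apply, ContinuousLinearMap.add_apply,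
      ContinuousLinearMap.smul_apply, ContinuousLinearMap.comp_apply,
      ContinuousLinearMap.proj_apply, hCj, ContinuousLinearEquiv.coe_coe, Complex.conjCLE_apply,
      hLFapp v, Pi.smul_apply, smul_eq_mul, hb, ha, dotProduct, Pi.star_apply, _root_.map_mul,
      _root_.map_add, Complex.star_def, Finset.mul_sum, Finset.sum_add_distrib]
    congr 1
    · exact Finset.sum_congr rfl fun i _ => by ring
    · exact Finset.sum_congr rfl fun i _ => by ring
  have hEapp : ∀ (i j : Fin N) (v : ℝ × ℝ), E i j v =
      s⁻¹ * (F0 i * ((starRingEnd ℂ) (((v.1 : ℂ) + (v.2 : ℂ) * Complex.I)) * (starRingEnd ℂ) (d j))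
        + star (F0 j) * (((v.1 : ℂ) + (v.2 : ℂ) * Complex.I) * d i))
      + (F0 i * star (F0 j)) * (-(s⁻¹ * (((v.1 : ℂ) + (v.2 : ℂ) * Complex.I) * b
          + (starRingEnd ℂ) (((v.1 : ℂ) + (v.2 : ℂ) * Complex.I)) * a) * s⁻¹)) := by
    intro i j v
    rw [hE]
    simp only [ContinuousLinearMap.add_apply, ContinuousLinearMap.smul_apply,
      ContinuousLinearMap.comp_apply, ContinuousLinearMap.proj_apply, hCj,
      ContinuousLinearEquiv.coe_coe, Complex.conjCLE_apply, hLFapp v, Pi.smul_apply,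
      smul_eq_mul, hLinv, ContinuousLinearMap.neg_apply,
      ContinuousLinearMap.mulLeftRight_apply, hLsapp v, _root_.map_mul, _root_.map_add,
      Complex.star_def]
    ring
  have hDapp : ∀ (v : ℝ × ℝ) i j, DD v i j = E i j v := fun _ _ _ => rfl
  refine ⟨hPmat.differentiableAt, ?_, ?_⟩
  · rw [dp, hPmat.fderiv]
    funext i j
    simp only [ContinuousLinearMap.pi_apply, Matrix.smul_apply, Matrix.sub_apply,
      Matrix.vecMulVec_apply, Pi.star_apply, hEapp, smul_eq_mul, Complex.star_def]
    norm_num [Complex.conj_I]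
    rw [hDapp, hDapp, hEapp, hEapp]
    norm_num [Complex.conj_I]
    ring_nf
    simp only [Complex.I_sq]
    ring
  · rw [dm, hPmat.fderiv]
    funext i j
    simp only [ContinuousLinearMap.pi_apply, Matrix.smul_apply, Matrix.add_apply,
      Matrix.sub_apply, Matrix.vecMulVec_apply, Pi.star_apply, hEapp, smul_eq_mul,
      Complex.star_def]
    rw [hDapp, hDapp, hEapp, hEapp]
    norm_num [Complex.conj_I]
    ring_nf
    simp only [Complex.I_sq]
    ring

lemma dpdm_one_sub_smul {N : ℕ} (P : ℝ × ℝ → Matrix (Fin N) (Fin N) ℂ) (p : ℝ × ℝ) (c : ℂ)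
    (h : DifferentiableAt ℝ P p) :
    dp (fun q => (1 : Matrix (Fin N) (Fin N) ℂ) - c • P q) p = (-c) • dp P p ∧
    dm (fun q => (1 : Matrix (Fin N) (Fin N) ℂ) - c • P q) p = (-c) • dm P p := by
  have h' : HasFDerivAt (fun q => (1 : Matrix (Fin N) (Fin N) ℂ) - c • P q)
      ((0 : ℝ × ℝ →L[ℝ] Matrix (Fin N) (Fin N) ℂ) - c • fderiv ℝ P p) p :=
    (hasFDerivAt_const _ _).sub (h.hasFDerivAt.const_smul c)
  constructor
  · rw [dp, dp, h'.fderiv]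
    simp only [ContinuousLinearMap.sub_apply, ContinuousLinearMap.zero_apply,
      ContinuousLinearMap.smul_apply]
    module
  · rw [dm, dm, h'.fderiv]
    simp only [ContinuousLinearMap.sub_apply, ContinuousLinearMap.zero_apply,
      ContinuousLinearMap.smul_apply]
    module

/-- For the projector `P` associated to a nowhere-vanishing holomorphic `f : ℂ → ℂᴺ` and
`λ ≠ ±1`, with `U¹ = (2/(1+λ))[∂₊P, P]` and `U² = (2/(1−λ))[∂₋P, P]`, the wave function
`Φ = I − (2/(1−λ))·P` satisfies the linear spectral problem `∂₊Φ = U¹·Φ`, `∂₋Φ = U²·Φ`. -/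
theorem wave_function_solves_LSP {N : ℕ} (f : ℂ → (Fin N → ℂ))
    (hf : Differentiable ℂ f) (hf0 : ∀ ξ, f ξ ≠ 0)
    (P : ℝ × ℝ → Matrix (Fin N) (Fin N) ℂ) (hPdef : P = projOf f)
    (lam : ℂ) (h1 : lam ≠ 1) (h2 : lam ≠ -1)
    (U1 U2 Phi : ℝ × ℝ → Matrix (Fin N) (Fin N) ℂ)
    (hU1 : U1 = fun p => (2 / (1 + lam)) • (dp P p * P p - P p * dp P p))
    (hU2 : U2 = fun p => (2 / (1 - lam)) • (dm P p * P p - P p * dm P p))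
    (hPhi : Phi = fun p => (1 : Matrix (Fin N) (Fin N) ℂ) - (2 / (1 - lam)) • P p) :
    ∀ p, dp Phi p = U1 p * Phi p ∧ dm Phi p = U2 p * Phi p := by
  subst hPdef; subst hU1; subst hU2; subst hPhi
  intro p
  obtain ⟨hdiff, hdp, hdm⟩ := projOf_deriv f hf hf0 p
  have h2' : (1 : ℂ) - lam ≠ 0 := sub_ne_zero.mpr (Ne.symm h1)
  have h1' : (1 : ℂ) + lam ≠ 0 := by
    intro h; exact h2 (by linear_combination h)
  set z : ℂ := (p.1 : ℂ) + (p.2 : ℂ) * Complex.I with hz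
  set F0 : Fin N → ℂ := f z with hF0
  set d : Fin N → ℂ := fderiv ℂ f z 1 with hd
  set s : ℂ := star F0 ⬝ᵥ F0 with hs
  set a : ℂ := star d ⬝ᵥ F0 with ha
  set b : ℂ := star F0 ⬝ᵥ d with hb
  set M : Matrix (Fin N) (Fin N) ℂ := vecMulVec F0 (star F0) with hM
  set A : Matrix (Fin N) (Fin N) ℂ := vecMulVec d (star F0) with hA
  set B : Matrix (Fin N) (Fin N) ℂ := vecMulVec F0 (star d) with hB
  have hs0 : s ≠ 0 := by rw [hs, hF0]; exact star_dot_self_ne_zero _ (hf0 z)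
  have hP0 : projOf f p = s⁻¹ • M := by
    rw [projOf, ← hz, ← hF0, ← hs, ← hM]
  have hMM : M * M = s • M := by rw [hM, vmv_mul_vmv, hs]
  have hAM : A * M = s • A := by rw [hA, hM, vmv_mul_vmv, hs]
  have hMA : M * A = b • M := by rw [hA, hM, vmv_mul_vmv, hb]
  have hBM : B * M = a • M := by rw [hB, hM, vmv_mul_vmv, ha]
  have hMB : M * B = s • B := by rw [hB, hM, vmv_mul_vmv, hs]
  have hX1P0 : (s⁻¹ • A - (s⁻¹ * s⁻¹ * b) • M) * (s⁻¹ • M)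
      = s⁻¹ • A - (s⁻¹ * s⁻¹ * b) • M := by
    simp only [sub_mul, smul_mul_assoc, mul_smul_comm, hAM, hMM, smul_smul]
    match_scalars <;> (field_simp; try ring)
  have hP0X1 : (s⁻¹ • M) * (s⁻¹ • A - (s⁻¹ * s⁻¹ * b) • M) = 0 := by
    simp only [mul_sub, smul_mul_assoc, mul_smul_comm, hMA, hMM, smul_smul]
    match_scalars <;> (field_simp; try ring)
  have hX2P0 : (s⁻¹ • B - (s⁻¹ * s⁻¹ * a) • M) * (s⁻¹ • M) = 0 := by
    simp only [sub_mul, smul_mul_assoc, mul_smul_comm, hBM, hMM, smul_smul]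
    match_scalars <;> (field_simp; try ring)
  have hP0X2 : (s⁻¹ • M) * (s⁻¹ • B - (s⁻¹ * s⁻¹ * a) • M)
      = s⁻¹ • B - (s⁻¹ * s⁻¹ * a) • M := by
    simp only [mul_sub, smul_mul_assoc, mul_smul_comm, hMB, hMM, smul_smul]
    match_scalars <;> (field_simp; try ring)
  obtain ⟨hdpPhi, hdmPhi⟩ := dpdm_one_sub_smul (projOf f) p (2 / (1 - lam)) hdiff
  have hsc : (2 / (1 + lam)) * (1 - 2 / (1 - lam)) = -(2 / (1 - lam)) := by
    field_simp
    ring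
  constructor
  · rw [hdpPhi]
    beta_reduce
    rw [hdp, hP0, hX1P0, hP0X1, sub_zero, smul_mul_assoc, mul_sub, mul_one,
      mul_smul_comm, hX1P0]
    rw [← hsc]
    module
  · rw [hdmPhi]
    beta_reduce
    rw [hdm, hP0, hX2P0, hP0X2, zero_sub, smul_mul_assoc, neg_mul, mul_sub, mul_one,
      mul_smul_comm, hX2P0, smul_zero, sub_zero]
    module
end
end
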